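/- arXiv:2510.16431 — 2 statements merged into one kernel-verified Lean document; each statement's English description precedes it below -/
import Mathlib

section
/- For every n ≥ 1, the number of nearest-neighbor lattice walks of length 2n in the quadrant ℤ≥0 × ℤ≥0 (steps in {(1,0),(−1,0),(0,1),(0,−1)}, never leaving the quadrant) that start and end at (0,0) equals C_n · C_{n+1}, where C_k = (1/(k+1))·binom(2k,k) is the k-th Catalan number. -/
open Finset DyckStep

def bvalI (b : Bool) : ℤ := bif b then 1 else -1

def gdP {N : ℕ} (S : Finset (Fin N)) (d : Fin N → Bool) : Prop :=
  (∀ j < N + 1, 0 ≤ ∑ i ∈ S.filter (fun i : Fin N => (i : ℕ) < j), bvalI (d i)) ∧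
    (∑ i ∈ S, bvalI (d i)) = 0

instance {N : ℕ} (S : Finset (Fin N)) (d : Fin N → Bool) : Decidable (gdP S d) := by
  unfold gdP; infer_instance

lemma gdP_all {N : ℕ} {S : Finset (Fin N)} {d : Fin N → Bool} (h : gdP S d) (j : ℕ) :
    0 ≤ ∑ i ∈ S.filter (fun i : Fin N => (i : ℕ) < j), bvalI (d i) := by
  rcases lt_or_ge j (N+1) with hj | hj
  · exact h.1 j hj
  · have : S.filter (fun i : Fin N => (i : ℕ) < j) = S := by
      apply filter_true_of_mem; intro i _; exact lt_of_lt_of_le i.isLt (by omega)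
    rw [this]; rw [h.2]

lemma count_take_ofFn {α : Type*} [DecidableEq α] :
    ∀ {m : ℕ} (g : Fin m → α) (a : α) (j : ℕ),
      ((List.ofFn g).take j).count a = #(univ.filter fun i : Fin m => (i : ℕ) < j ∧ g i = a)
  | 0, g, a, j => by simp
  | m + 1, g, a, j => by
    cases j with
    | zero => simp
    | succ j =>
      rw [List.ofFn_succ, List.take_succ_cons, List.count_cons]
      rw [count_take_ofFn (fun i => g i.succ) a j]
      have : (univ.filter fun i : Fin (m+1) => (i : ℕ) < j + 1 ∧ g i = a) =
          ((univ.filter fun i : Fin m => (i : ℕ) < j ∧ g i.succ = a).map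
            ⟨Fin.succ, Fin.succ_injective m⟩) ∪ (if g 0 = a then {0} else ∅) := by
        ext i
        simp only [mem_filter, mem_univ, true_and, mem_union, mem_map,
          Function.Embedding.coeFn_mk]
        constructor
        · rintro ⟨hij, hga⟩
          rcases Fin.eq_zero_or_eq_succ i with rfl | ⟨i', rfl⟩
          · right; simp [hga]
          · left; exact ⟨i', ⟨by simpa using hij, hga⟩, rfl⟩
        · rintro (⟨i', ⟨hi', hga⟩, rfl⟩ | hi)
          · exact ⟨by simpa using hi', hga⟩
          · split_ifs at hi with h
            · simp only [mem_singleton] at hi; subst hi; simp [h]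
            · simp at hi
      rw [this, card_union_of_disjoint, card_map]
      · by_cases h : g 0 = a <;> simp [h]
      · rw [Finset.disjoint_left]
        intro x hx hx0
        simp only [mem_map, Function.Embedding.coeFn_mk] at hx
        obtain ⟨i', _, rfl⟩ := hx
        split_ifs at hx0 <;> simp only [mem_singleton, notMem_empty] at hx0
        exact (Fin.succ_ne_zero i') hx0

lemma sum_bval_split {N : ℕ} (A : Finset (Fin N)) (d : Fin N → Bool) :
    ∑ i ∈ A, bvalI (d i) =
      (#(A.filter fun i => d i = true) : ℤ) - #(A.filter fun i => d i = false) := by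
  rw [← Finset.sum_filter_add_sum_filter_not A (fun i => d i = true)]
  have h1 : ∑ i ∈ A.filter (fun i => d i = true), bvalI (d i)
      = ∑ _i ∈ A.filter (fun i => d i = true), (1 : ℤ) :=
    Finset.sum_congr rfl (fun i hi => by
      simp only [mem_filter] at hi; simp [bvalI, hi.2])
  have he : (A.filter fun i => ¬ d i = true) = (A.filter fun i => d i = false) := by
    apply Finset.filter_congr; intro i _; simp
  have h2 : ∑ i ∈ A.filter (fun i => d i = false), bvalI (d i)
      = ∑ _i ∈ A.filter (fun i => d i = false), (-1 : ℤ) :=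
    Finset.sum_congr rfl (fun i hi => by
      simp only [mem_filter] at hi; simp [bvalI, hi.2])
  rw [he, h1, h2]; simp; ring

/-- the Dyck word list associated to `e`. -/
def wordOf {m : ℕ} (e : Fin m → Bool) : List DyckStep :=
  List.ofFn (fun i => bif e i then U else D)

lemma wordOf_length {m : ℕ} (e : Fin m → Bool) : (wordOf e).length = m := by
  simp [wordOf]

lemma wordOf_count_take {m : ℕ} (e : Fin m → Bool) (j : ℕ) :
    (((wordOf e).take j).count U : ℤ) - ((wordOf e).take j).count D
      = ∑ i ∈ univ.filter (fun i : Fin m => (i : ℕ) < j), bvalI (e i) := by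
  rw [sum_bval_split, wordOf, count_take_ofFn, count_take_ofFn, filter_filter, filter_filter]
  congr 2 <;> { congr 1; apply Finset.filter_congr; intro i _; cases h : e i <;> simp [h] }

lemma wordOf_psum {m : ℕ} (e : Fin m → Bool) (j : ℕ) :
    (0 ≤ ∑ i ∈ univ.filter (fun i : Fin m => (i : ℕ) < j), bvalI (e i)) ↔
      ((wordOf e).take j).count D ≤ ((wordOf e).take j).count U := by
  rw [← wordOf_count_take]; omega

lemma wordOf_total {m : ℕ} (e : Fin m → Bool) :
    ((wordOf e).count U : ℤ) - (wordOf e).count D = ∑ i : Fin m, bvalI (e i) := by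
  have := wordOf_count_take e m
  rw [List.take_of_length_le (le_of_eq (wordOf_length e))] at this
  rw [this]
  congr 1
  apply Finset.filter_true_of_mem
  intro i _; exact i.isLt

def balDyckEquiv (m : ℕ) :
    {e : Fin m → Bool // gdP (univ : Finset (Fin m)) e} ≃
      {p : DyckWord // p.toList.length = m} where
  toFun := fun ⟨e, he⟩ =>
    ⟨⟨wordOf e,
      by have h := wordOf_total e; rw [he.2] at h; omega,
      fun j => (wordOf_psum e j).mp (gdP_all he j)⟩, wordOf_length e⟩
  invFun := fun ⟨p, hp⟩ => by
    refine ⟨fun i => decide (p.toList.get ⟨i.val, hp ▸ i.isLt⟩ = U), ?_⟩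
    have hw : wordOf (fun i : Fin m => decide (p.toList.get ⟨i.val, hp ▸ i.isLt⟩ = U))
        = p.toList := by
      apply List.ext_getElem
      · rw [wordOf_length, hp]
      · intro i h1 h2
        simp only [wordOf, List.getElem_ofFn]
        rcases (p.toList.get ⟨i, h2⟩).dichotomy with h | h <;>
          · simp only [List.get_eq_getElem] at h
            simp [h]
    constructor
    · intro j _
      rw [wordOf_psum, hw]
      exact p.count_D_le_count_U j
    · have h := wordOf_total (fun i : Fin m => decide (p.toList.get ⟨i.val, hp ▸ i.isLt⟩ = U))
      rw [hw, p.count_U_eq_count_D] at h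
      simp only at h ⊢
      omega
  left_inv := fun ⟨e, he⟩ => by
    apply Subtype.ext
    funext i
    simp only [wordOf, List.get_eq_getElem, List.getElem_ofFn]
    cases h : e i <;> simp [h]
  right_inv := fun ⟨p, hp⟩ => by
    apply Subtype.ext
    apply DyckWord.ext
    apply List.ext_getElem
    · rw [wordOf_length, hp]
    · intro i h1 h2
      simp only [wordOf, List.getElem_ofFn]
      rcases (p.toList.get ⟨i, h2⟩).dichotomy with h | h <;>
        · simp only [List.get_eq_getElem] at h
          simp [h]

lemma card_length_dyck (m : ℕ) :
    Nat.card {p : DyckWord // p.toList.length = m} =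
      if 2 ∣ m then catalan (m / 2) else 0 := by
  split_ifs with h
  · obtain ⟨k, rfl⟩ := h
    have e : {p : DyckWord // p.toList.length = 2 * k} ≃ {p : DyckWord // p.semilength = k} :=
      Equiv.subtypeEquivRight (fun p => by
        have := p.two_mul_semilength_eq_length; omega)
    rw [Nat.card_congr e, Nat.card_eq_fintype_card,
      DyckWord.card_dyckWord_semilength_eq_catalan]
    congr 1
    omega
  · have : IsEmpty {p : DyckWord // p.toList.length = m} :=
      ⟨fun ⟨p, hp⟩ => h ⟨p.semilength, by rw [← hp, ← p.two_mul_semilength_eq_length]⟩⟩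
    simp [Nat.card_of_isEmpty]

lemma balCard (m : ℕ) :
    Nat.card {e : Fin m → Bool // gdP (univ : Finset (Fin m)) e} =
      if 2 ∣ m then catalan (m / 2) else 0 := by
  rw [Nat.card_congr (balDyckEquiv m), card_length_dyck]

section transport
variable {N : ℕ} (S : Finset (Fin N))

lemma lower_cut (j : ℕ) :
    ∃ k ≤ S.card, ∀ a : Fin S.card,
      ((S.orderEmbOfFin rfl a : Fin N) : ℕ) < j ↔ (a : ℕ) < k := by
  set σ := S.orderEmbOfFin rfl with hσ
  set T : Finset (Fin S.card) := univ.filter (fun a => ((σ a : Fin N) : ℕ) < j) with hT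
  have hlow : ∀ a b : Fin S.card, b ≤ a → a ∈ T → b ∈ T := by
    intro a b hba ha
    simp only [hT, mem_filter, mem_univ, true_and] at ha ⊢
    exact lt_of_le_of_lt (by exact_mod_cast σ.monotone hba) ha
  refine ⟨T.card, le_trans (card_le_card (subset_univ T)) (by simp), fun a => ?_⟩
  have hmem : a ∈ T ↔ (a : ℕ) < T.card := by
    constructor
    · intro ha
      have : Finset.Iic a ⊆ T := fun b hb => hlow a b (by simpa using hb) ha
      have hc := card_le_card this
      rw [Fin.card_Iic] at hc
      omega
    · intro ha
      by_contra hna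
      have : T ⊆ Finset.Iio a := by
        intro b hb
        simp only [Finset.mem_Iio]
        by_contra hab
        exact hna (hlow b a (le_of_not_gt hab) hb)
      have hc := card_le_card this
      rw [Fin.card_Iio] at hc
      omega
  rw [← hmem]
  simp [hT]

lemma upper_cut (k : ℕ) :
    ∃ j < N + 1, ∀ a : Fin S.card,
      ((S.orderEmbOfFin rfl a : Fin N) : ℕ) < j ↔ (a : ℕ) < k := by
  set σ := S.orderEmbOfFin rfl with hσ
  rcases Nat.eq_zero_or_pos k with rfl | hk
  · exact ⟨0, by omega, fun a => by simp⟩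
  rcases le_or_gt k S.card with hks | hks
  · have hk1 : k - 1 < S.card := by omega
    refine ⟨(σ ⟨k - 1, hk1⟩ : Fin N) + 1, by have := (σ ⟨k - 1, hk1⟩ : Fin N).isLt; omega,
      fun a => ?_⟩
    have : ((σ a : Fin N) : ℕ) < ((σ ⟨k - 1, hk1⟩ : Fin N) : ℕ) + 1 ↔
        (a : ℕ) ≤ k - 1 := by
      rw [Nat.lt_succ_iff]
      constructor
      · intro h
        have := σ.le_iff_le.mp (by exact_mod_cast h : σ a ≤ σ ⟨k - 1, hk1⟩)
        exact_mod_cast this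
      · intro h
        exact_mod_cast σ.le_iff_le.mpr (by exact_mod_cast (show a ≤ ⟨k-1, hk1⟩ from h))
    rw [this]; omega
  · refine ⟨N, by omega, fun a => ?_⟩
    constructor
    · intro _; omega
    · intro _; exact (σ a : Fin N).isLt

lemma sum_restrict (d : Fin N → Bool) (p : Fin N → Prop) [DecidablePred p] :
    ∑ i ∈ S.filter p, bvalI (d i) =
      ∑ a ∈ univ.filter (fun a : Fin S.card => p (S.orderEmbOfFin rfl a)),
        bvalI (d (S.orderEmbOfFin rfl a)) := by
  set σ := S.orderEmbOfFin rfl with hσ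
  have himg : S = univ.image (fun a : Fin S.card => (σ a : Fin N)) := by
    apply Finset.eq_of_subset_of_card_le
    · intro i hi
      simp only [mem_image, mem_univ, true_and]
      have : i ∈ Set.range (⇑σ) := by
        rw [Finset.range_orderEmbOfFin]; exact hi
      obtain ⟨a, ha⟩ := this
      exact ⟨a, ha⟩
    · rw [Finset.card_image_of_injective _ σ.injective]; simp
  conv_lhs => rw [himg]
  rw [Finset.filter_image, Finset.sum_image (fun a _ b _ h => σ.injective h)]

lemma gdP_restrict (d : Fin N → Bool) :
    gdP S d ↔ gdP (univ : Finset (Fin S.card)) (fun a => d (S.orderEmbOfFin rfl a)) := by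
  set σ := S.orderEmbOfFin rfl with hσ
  have htot : ∑ i ∈ S, bvalI (d i) = ∑ a : Fin S.card, bvalI (d (σ a)) := by
    have := sum_restrict S d (fun _ => True)
    simpa using this
  constructor
  · intro h
    refine ⟨fun k hk => ?_, by rw [← htot]; exact h.2⟩
    obtain ⟨j, hj, hiff⟩ := upper_cut S k
    have := h.1 j hj
    rw [sum_restrict S d (fun i => (i : ℕ) < j)] at this
    have hfe : (univ.filter fun a : Fin S.card => ((σ a : Fin N) : ℕ) < j)
        = (univ.filter fun a : Fin S.card => (a : ℕ) < k) :=
      Finset.filter_congr (fun a _ => by simpa using (hiff a))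
    rwa [hfe] at this
  · intro h
    refine ⟨fun j hj => ?_, by rw [htot]; exact h.2⟩
    obtain ⟨k, hk, hiff⟩ := lower_cut S j
    rw [sum_restrict S d (fun i => (i : ℕ) < j)]
    have hfe : (univ.filter fun a : Fin S.card => ((σ a : Fin N) : ℕ) < j)
        = (univ.filter fun a : Fin S.card => (a : ℕ) < k) :=
      Finset.filter_congr (fun a _ => by simpa using (hiff a))
    rw [hfe]
    exact h.1 k (by omega)

end transport

section split
variable {N : ℕ}

lemma emb_iso (S : Finset (Fin N)) (a : Fin S.card) :
    (S.orderEmbOfFin rfl a : Fin N) = ((S.orderIsoOfFin rfl a : { x // x ∈ S }) : Fin N) := rfl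

def splitEquiv (S : Finset (Fin N)) :
    {d : Fin N → Bool // gdP S d ∧ gdP Sᶜ d} ≃
      {e : Fin S.card → Bool // gdP (univ : Finset (Fin S.card)) e} ×
        {f : Fin Sᶜ.card → Bool // gdP (univ : Finset (Fin Sᶜ.card)) f} where
  toFun := fun ⟨d, hd⟩ =>
    (⟨fun a => d (S.orderEmbOfFin rfl a), (gdP_restrict S d).mp hd.1⟩,
     ⟨fun a => d (Sᶜ.orderEmbOfFin rfl a), (gdP_restrict Sᶜ d).mp hd.2⟩)
  invFun := fun ⟨⟨e, he⟩, ⟨f, hf⟩⟩ => by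
    refine ⟨fun i => if hi : i ∈ S then e ((S.orderIsoOfFin rfl).symm ⟨i, hi⟩)
      else f ((Sᶜ.orderIsoOfFin rfl).symm ⟨i, Finset.mem_compl.mpr hi⟩), ?_, ?_⟩
    · rw [gdP_restrict S]
      convert he using 1
      funext a
      have hmem : (S.orderEmbOfFin rfl a : Fin N) ∈ S := Finset.orderEmbOfFin_mem S rfl a
      rw [dif_pos hmem]
      congr 1
      have : (⟨(S.orderEmbOfFin rfl a : Fin N), hmem⟩ : {x // x ∈ S}) = S.orderIsoOfFin rfl a :=
        Subtype.ext (emb_iso _ _)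
      rw [this, OrderIso.symm_apply_apply]
    · rw [gdP_restrict Sᶜ]
      convert hf using 1
      funext a
      have hmem : (Sᶜ.orderEmbOfFin rfl a : Fin N) ∈ Sᶜ := Finset.orderEmbOfFin_mem Sᶜ rfl a
      have hnot : ¬ (Sᶜ.orderEmbOfFin rfl a : Fin N) ∈ S := Finset.mem_compl.mp hmem
      rw [dif_neg hnot]
      congr 1
      have : (⟨(Sᶜ.orderEmbOfFin rfl a : Fin N), Finset.mem_compl.mpr hnot⟩ : {x // x ∈ Sᶜ})
          = Sᶜ.orderIsoOfFin rfl a := Subtype.ext (emb_iso _ _)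
      rw [this, OrderIso.symm_apply_apply]
  left_inv := fun ⟨d, hd⟩ => by
    apply Subtype.ext
    funext i
    by_cases hi : i ∈ S
    · simp only [dif_pos hi]
      congr 1
      have : (S.orderEmbOfFin rfl ((S.orderIsoOfFin rfl).symm ⟨i, hi⟩) : Fin N)
          = ((S.orderIsoOfFin rfl ((S.orderIsoOfFin rfl).symm ⟨i, hi⟩) : {x // x ∈ S}) : Fin N) :=
        emb_iso S _
      rw [this, OrderIso.apply_symm_apply]
    · simp only [dif_neg hi]
      congr 1
      have : (Sᶜ.orderEmbOfFin rfl ((Sᶜ.orderIsoOfFin rfl).symm ⟨i, Finset.mem_compl.mpr hi⟩) : Fin N)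
          = ((Sᶜ.orderIsoOfFin rfl ((Sᶜ.orderIsoOfFin rfl).symm ⟨i, Finset.mem_compl.mpr hi⟩) :
            {x // x ∈ Sᶜ}) : Fin N) := emb_iso Sᶜ _
      rw [this, OrderIso.apply_symm_apply]
  right_inv := fun ⟨⟨e, he⟩, ⟨f, hf⟩⟩ => by
    have h1 : ∀ (a : Fin S.card), (S.orderEmbOfFin rfl a : Fin N) ∈ S :=
      fun a => Finset.orderEmbOfFin_mem S rfl a
    ext a
    · simp only
      rw [dif_pos (h1 a)]
      congr 1
      have : (⟨(S.orderEmbOfFin rfl a : Fin N), h1 a⟩ : {x // x ∈ S}) = S.orderIsoOfFin rfl a :=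
        Subtype.ext (emb_iso _ _)
      rw [this, OrderIso.symm_apply_apply]
    · simp only
      have hmem : (Sᶜ.orderEmbOfFin rfl a : Fin N) ∈ Sᶜ := Finset.orderEmbOfFin_mem Sᶜ rfl a
      have hnot : ¬ (Sᶜ.orderEmbOfFin rfl a : Fin N) ∈ S := Finset.mem_compl.mp hmem
      rw [dif_neg hnot]
      congr 1
      have : (⟨(Sᶜ.orderEmbOfFin rfl a : Fin N), Finset.mem_compl.mpr hnot⟩ : {x // x ∈ Sᶜ})
          = Sᶜ.orderIsoOfFin rfl a := Subtype.ext (emb_iso _ _)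
      rw [this, OrderIso.symm_apply_apply]

lemma card_split (S : Finset (Fin N)) :
    Nat.card {d : Fin N → Bool // gdP S d ∧ gdP Sᶜ d} =
      (if 2 ∣ S.card then catalan (S.card / 2) else 0) *
        (if 2 ∣ (N - S.card) then catalan ((N - S.card) / 2) else 0) := by
  rw [Nat.card_congr (splitEquiv S), Nat.card_prod, balCard, balCard, Finset.card_compl]
  simp
end split

section walk
variable {N : ℕ}

def psumZ {N : ℕ} (v : Fin N → ℤ) (j : ℕ) : ℤ :=
  ∑ i ∈ univ.filter (fun i : Fin N => (i : ℕ) < j), v i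

lemma filter_lt_succ (j : ℕ) (hj : j < N) :
    (univ.filter (fun i : Fin N => (i : ℕ) < j + 1)) =
      insert ⟨j, hj⟩ (univ.filter (fun i : Fin N => (i : ℕ) < j)) := by
  ext i
  simp only [mem_filter, mem_univ, true_and, mem_insert]
  constructor
  · intro h
    rcases Nat.lt_succ_iff_lt_or_eq.mp h with h | h
    · right; exact h
    · left; exact Fin.ext h
  · rintro (rfl | h)
    · simp
    · omega

lemma psumZ_succ (v : Fin N → ℤ) (j : ℕ) (hj : j < N) :
    psumZ v (j + 1) = psumZ v j + v ⟨j, hj⟩ := by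
  rw [psumZ, filter_lt_succ j hj, Finset.sum_insert (by simp), psumZ]
  ring

lemma psumZ_zero (v : Fin N → ℤ) : psumZ v 0 = 0 := by simp [psumZ]

lemma psumZ_diff (w : Fin (N + 1) → ℤ) :
    ∀ (j : ℕ) (hj : j < N + 1),
      psumZ (fun i : Fin N => w i.succ - w i.castSucc) j = w ⟨j, hj⟩ - w 0
  | 0, hj => by
    rw [psumZ_zero]
    have : (⟨0, hj⟩ : Fin (N+1)) = 0 := rfl
    rw [this]; ring
  | j + 1, hj => by
    rw [psumZ_succ _ j (by omega), psumZ_diff w j (by omega)]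
    have h1 : (⟨j, by omega⟩ : Fin N).succ = ⟨j + 1, hj⟩ := rfl
    have h2 : ((⟨j, by omega⟩ : Fin N).castSucc : Fin (N+1)) = ⟨j, by omega⟩ := rfl
    rw [h1, h2]
    ring

def StepOK (s : Fin N → ℤ × ℤ) : Prop :=
  (∀ i, s i ∈ ({(1,0), (-1,0), (0,1), (0,-1)} : Set (ℤ × ℤ))) ∧
  (∀ j < N + 1, 0 ≤ psumZ (fun i => (s i).1) j ∧ 0 ≤ psumZ (fun i => (s i).2) j) ∧
  psumZ (fun i => (s i).1) N = 0 ∧ psumZ (fun i => (s i).2) N = 0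

def walkEquiv (N : ℕ) :
    {w : Fin (N+1) → ℤ × ℤ //
      w 0 = (0, 0) ∧ w (Fin.last N) = (0, 0) ∧
      (∀ i, 0 ≤ (w i).1 ∧ 0 ≤ (w i).2) ∧
      (∀ i : Fin N, w i.succ - w i.castSucc ∈
        ({(1,0), (-1,0), (0,1), (0,-1)} : Set (ℤ × ℤ)))}
    ≃ {s : Fin N → ℤ × ℤ // StepOK s} where
  toFun := fun ws => ⟨fun i => ws.1 i.succ - ws.1 i.castSucc, by
    obtain ⟨w, h0, hl, hnn, hst⟩ := ws
    refine ⟨hst, ?_, ?_, ?_⟩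
    · intro j hj
      have k1 := psumZ_diff (fun i => (w i).1) j hj
      have k2 := psumZ_diff (fun i => (w i).2) j hj
      simp only [h0] at k1 k2
      constructor
      · have h : psumZ (fun i : Fin N => (w i.succ - w i.castSucc).1) j
            = psumZ (fun i : Fin N => (w i.succ).1 - (w i.castSucc).1) j := by congr 1
        rw [h, k1]
        simpa using (hnn ⟨j, hj⟩).1
      · have h : psumZ (fun i : Fin N => (w i.succ - w i.castSucc).2) j
            = psumZ (fun i : Fin N => (w i.succ).2 - (w i.castSucc).2) j := by congr 1
        rw [h, k2]
        simpa using (hnn ⟨j, hj⟩).2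
    · have k1 := psumZ_diff (fun i => (w i).1) N (by omega)
      simp only [h0] at k1
      have h : psumZ (fun i : Fin N => (w i.succ - w i.castSucc).1) N
          = psumZ (fun i : Fin N => (w i.succ).1 - (w i.castSucc).1) N := by congr 1
      rw [h, k1]
      have h2 : (⟨N, by omega⟩ : Fin (N+1)) = Fin.last N := rfl
      rw [h2, hl]
      simp
    · have k2 := psumZ_diff (fun i => (w i).2) N (by omega)
      simp only [h0] at k2
      have h : psumZ (fun i : Fin N => (w i.succ - w i.castSucc).2) N
          = psumZ (fun i : Fin N => (w i.succ).2 - (w i.castSucc).2) N := by congr 1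
      rw [h, k2]
      have h2 : (⟨N, by omega⟩ : Fin (N+1)) = Fin.last N := rfl
      rw [h2, hl]
      simp⟩
  invFun := fun sc => ⟨fun j => (psumZ (fun i => (sc.1 i).1) (j : ℕ),
      psumZ (fun i => (sc.1 i).2) (j : ℕ)), by
    obtain ⟨s, hs⟩ := sc
    refine ⟨?_, ?_, ?_, ?_⟩
    · show (psumZ (fun i => (s i).1) ((0 : Fin (N+1)) : ℕ),
        psumZ (fun i => (s i).2) ((0 : Fin (N+1)) : ℕ)) = ((0 : ℤ), (0 : ℤ))
      rw [show ((0 : Fin (N+1)) : ℕ) = 0 from rfl, psumZ_zero, psumZ_zero]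
    · show (psumZ (fun i => (s i).1) ((Fin.last N : Fin (N+1)) : ℕ),
        psumZ (fun i => (s i).2) ((Fin.last N : Fin (N+1)) : ℕ)) = ((0 : ℤ), (0 : ℤ))
      rw [show ((Fin.last N : Fin (N+1)) : ℕ) = N from rfl, hs.2.2.1, hs.2.2.2]
    · intro j
      exact hs.2.1 (j : ℕ) j.isLt
    · intro i
      show (psumZ (fun k => (s k).1) ((i.succ : Fin (N+1)) : ℕ),
          psumZ (fun k => (s k).2) ((i.succ : Fin (N+1)) : ℕ))
          - (psumZ (fun k => (s k).1) ((i.castSucc : Fin (N+1)) : ℕ),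
            psumZ (fun k => (s k).2) ((i.castSucc : Fin (N+1)) : ℕ)) ∈
          ({(1,0), (-1,0), (0,1), (0,-1)} : Set (ℤ × ℤ))
      rw [show ((i.succ : Fin (N+1)) : ℕ) = (i : ℕ) + 1 from rfl,
        show ((i.castSucc : Fin (N+1)) : ℕ) = (i : ℕ) from rfl,
        psumZ_succ _ _ i.isLt, psumZ_succ _ _ i.isLt, Prod.mk_sub_mk]
      have h : ((psumZ (fun k => (s k).1) ↑i + (s ⟨(i : ℕ), i.isLt⟩).1
          - psumZ (fun k => (s k).1) ↑i,
          psumZ (fun k => (s k).2) ↑i + (s ⟨(i : ℕ), i.isLt⟩).2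
          - psumZ (fun k => (s k).2) ↑i) : ℤ × ℤ) = s i := by
        have : (⟨(i : ℕ), i.isLt⟩ : Fin N) = i := by ext; rfl
        rw [this]
        ext <;> simp <;> ring
      rw [h]
      exact hs.1 i⟩
  left_inv := fun ⟨w, h0, hl, hnn, hst⟩ => by
    apply Subtype.ext
    funext j
    show (psumZ (fun i : Fin N => (w i.succ - w i.castSucc).1) (j : ℕ),
      psumZ (fun i : Fin N => (w i.succ - w i.castSucc).2) (j : ℕ)) = w j
    have k1 := psumZ_diff (fun i => (w i).1) (j : ℕ) j.isLt
    have k2 := psumZ_diff (fun i => (w i).2) (j : ℕ) j.isLt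
    simp only [h0] at k1 k2
    have hj : (⟨(j : ℕ), j.isLt⟩ : Fin (N+1)) = j := by ext; rfl
    rw [hj] at k1 k2
    have e1 : psumZ (fun i : Fin N => ((w i.succ - w i.castSucc)).1) (j : ℕ)
        = psumZ (fun i : Fin N => (w i.succ).1 - (w i.castSucc).1) (j : ℕ) := by congr 1
    have e2 : psumZ (fun i : Fin N => ((w i.succ - w i.castSucc)).2) (j : ℕ)
        = psumZ (fun i : Fin N => (w i.succ).2 - (w i.castSucc).2) (j : ℕ) := by congr 1
    rw [e1, e2, k1, k2]
    ext <;> simp <;> ring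
  right_inv := fun ⟨s, hs⟩ => by
    apply Subtype.ext
    funext i
    show (psumZ (fun k => (s k).1) ((i.succ : Fin (N+1)) : ℕ),
        psumZ (fun k => (s k).2) ((i.succ : Fin (N+1)) : ℕ))
        - (psumZ (fun k => (s k).1) ((i.castSucc : Fin (N+1)) : ℕ),
          psumZ (fun k => (s k).2) ((i.castSucc : Fin (N+1)) : ℕ)) = s i
    rw [show ((i.succ : Fin (N+1)) : ℕ) = (i : ℕ) + 1 from rfl,
      show ((i.castSucc : Fin (N+1)) : ℕ) = (i : ℕ) from rfl,
      psumZ_succ _ _ i.isLt, psumZ_succ _ _ i.isLt, Prod.mk_sub_mk]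
    have : (⟨(i : ℕ), i.isLt⟩ : Fin N) = i := by ext; rfl
    rw [this]
    ext <;> simp <;> ring

end walk

section enc
variable {N : ℕ}

def encBB (b : Bool × Bool) : ℤ × ℤ := if b.1 then (bvalI b.2, 0) else (0, bvalI b.2)

def decBB (p : ℤ × ℤ) : Bool × Bool := (decide (p.2 = 0), decide (0 < p.1 + p.2))

lemma enc_dec {p : ℤ × ℤ} (hp : p ∈ ({(1,0), (-1,0), (0,1), (0,-1)} : Set (ℤ × ℤ))) :
    encBB (decBB p) = p := by
  simp only [Set.mem_insert_iff, Set.mem_singleton_iff] at hp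
  rcases hp with rfl | rfl | rfl | rfl <;> norm_num [encBB, decBB, bvalI]

lemma dec_enc (b : Bool × Bool) : decBB (encBB b) = b := by
  rcases b with ⟨b1, b2⟩
  cases b1 <;> cases b2 <;> norm_num [encBB, decBB, bvalI]

lemma enc_fst (b : Bool × Bool) :
    (encBB b).1 = if b.1 = true then bvalI b.2 else 0 := by
  cases hb : b.1 <;> simp [encBB, hb]

lemma enc_snd (b : Bool × Bool) :
    (encBB b).2 = if b.1 = true then 0 else bvalI b.2 := by
  cases hb : b.1 <;> simp [encBB, hb]

def CondBB (c : Fin N → Bool × Bool) : Prop :=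
  gdP (univ.filter fun i => (c i).1 = true) (fun i => (c i).2) ∧
  gdP (univ.filter fun i => (c i).1 = true)ᶜ (fun i => (c i).2)

lemma psum_enc_fst (c : Fin N → Bool × Bool) (j : ℕ) :
    psumZ (fun i => (encBB (c i)).1) j =
      ∑ i ∈ (univ.filter fun i => (c i).1 = true).filter (fun i : Fin N => (i : ℕ) < j),
        bvalI ((c i).2) := by
  rw [psumZ, Finset.filter_filter]
  rw [Finset.sum_filter]
  rw [Finset.sum_filter]
  apply Finset.sum_congr rfl
  intro i _
  rw [enc_fst]
  by_cases h1 : (c i).1 = true <;> by_cases h2 : (i : ℕ) < j <;> simp [h1, h2]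

lemma psum_enc_snd (c : Fin N → Bool × Bool) (j : ℕ) :
    psumZ (fun i => (encBB (c i)).2) j =
      ∑ i ∈ ((univ.filter fun i => (c i).1 = true)ᶜ).filter (fun i : Fin N => (i : ℕ) < j),
        bvalI ((c i).2) := by
  have hc : (univ.filter fun i : Fin N => (c i).1 = true)ᶜ
      = univ.filter (fun i => ¬ (c i).1 = true) := by
    ext i; simp
  rw [psumZ, hc, Finset.filter_filter, Finset.sum_filter, Finset.sum_filter]
  apply Finset.sum_congr rfl
  intro i _
  rw [enc_snd]
  by_cases h1 : (c i).1 = true <;> by_cases h2 : (i : ℕ) < j <;> simp [h1, h2]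

lemma total_enc_fst (c : Fin N → Bool × Bool) :
    psumZ (fun i => (encBB (c i)).1) N =
      ∑ i ∈ (univ.filter fun i => (c i).1 = true), bvalI ((c i).2) := by
  rw [psum_enc_fst]
  congr 1
  apply Finset.filter_true_of_mem
  intro i _
  exact i.isLt

lemma total_enc_snd (c : Fin N → Bool × Bool) :
    psumZ (fun i => (encBB (c i)).2) N =
      ∑ i ∈ (univ.filter fun i => (c i).1 = true)ᶜ, bvalI ((c i).2) := by
  rw [psum_enc_snd]
  congr 1
  apply Finset.filter_true_of_mem
  intro i _
  exact i.isLt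

lemma cond_enc (c : Fin N → Bool × Bool) :
    StepOK (fun i => encBB (c i)) ↔ CondBB c := by
  constructor
  · intro ⟨_, hps, ht1, ht2⟩
    refine ⟨⟨fun j hj => ?_, ?_⟩, ⟨fun j hj => ?_, ?_⟩⟩
    · rw [← psum_enc_fst]; exact (hps j hj).1
    · rw [← total_enc_fst]; exact ht1
    · rw [← psum_enc_snd]; exact (hps j hj).2
    · rw [← total_enc_snd]; exact ht2
  · intro ⟨h1, h2⟩
    refine ⟨fun i => by cases hb1 : (c i).1 <;> cases hb2 : (c i).2 <;>
        simp [encBB, hb1, hb2, bvalI], fun j hj => ?_, ?_, ?_⟩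
    · exact ⟨by rw [psum_enc_fst]; exact h1.1 j hj, by rw [psum_enc_snd]; exact h2.1 j hj⟩
    · rw [total_enc_fst]; exact h1.2
    · rw [total_enc_snd]; exact h2.2

def stepEquiv (N : ℕ) : {s : Fin N → ℤ × ℤ // StepOK s} ≃ {c : Fin N → Bool × Bool // CondBB c}
    where
  toFun := fun ⟨s, hs⟩ => ⟨fun i => decBB (s i), by
    have he : (fun i => encBB (decBB (s i))) = s := funext fun i => enc_dec (hs.1 i)
    exact (cond_enc fun i => decBB (s i)).mp (by rw [he]; exact hs)⟩
  invFun := fun ⟨c, hc⟩ => ⟨fun i => encBB (c i), (cond_enc c).mpr hc⟩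
  left_inv := fun ⟨s, hs⟩ => Subtype.ext (funext fun i => enc_dec (hs.1 i))
  right_inv := fun ⟨c, hc⟩ => Subtype.ext (funext fun i => dec_enc (c i))

end enc

section count
variable (N : ℕ)

def SH (h : Fin N → Bool) : Finset (Fin N) := univ.filter (fun i => h i = true)

def sigmaEquiv : {c : Fin N → Bool × Bool // CondBB c} ≃
    Σ h : Fin N → Bool, {d : Fin N → Bool // gdP (SH N h) d ∧ gdP (SH N h)ᶜ d} :=
  ((Equiv.arrowProdEquivProdArrow (Fin N) (fun _ => Bool) (fun _ => Bool)).subtypeEquiv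
    (p := CondBB)
    (q := fun x : (Fin N → Bool) × (Fin N → Bool) => gdP (SH N x.1) x.2 ∧ gdP (SH N x.1)ᶜ x.2)
    (fun c => Iff.rfl)).trans (Equiv.subtypeProdEquivSigmaSubtype
      (fun (h : Fin N → Bool) (d : Fin N → Bool) => gdP (SH N h) d ∧ gdP (SH N h)ᶜ d))

def F2 (m : ℕ) : ℕ :=
  (if 2 ∣ m then catalan (m / 2) else 0) * (if 2 ∣ (N - m) then catalan ((N - m) / 2) else 0)

def finsetEquiv : (Fin N → Bool) ≃ Finset (Fin N) where
  toFun h := SH N h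
  invFun S := fun i => decide (i ∈ S)
  left_inv h := funext fun i => by by_cases hh : h i <;> simp [SH, hh]
  right_inv S := by ext i; simp [SH]

lemma card_sigma_eq :
    Nat.card (Σ h : Fin N → Bool, {d : Fin N → Bool // gdP (SH N h) d ∧ gdP (SH N h)ᶜ d})
      = ∑ m ∈ Finset.range (N + 1), N.choose m * F2 N m := by
  rw [Nat.card_eq_fintype_card, Fintype.card_sigma]
  have hterm : ∀ h : Fin N → Bool,
      Fintype.card {d : Fin N → Bool // gdP (SH N h) d ∧ gdP (SH N h)ᶜ d}
        = F2 N ((SH N h).card) := fun h => by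
    rw [← Nat.card_eq_fintype_card, card_split]; rfl
  rw [Finset.sum_congr rfl (fun h _ => hterm h)]
  rw [Fintype.sum_equiv (finsetEquiv N) (fun h => F2 N ((SH N h).card))
    (fun S => F2 N S.card) (fun h => rfl)]
  rw [← Finset.powerset_univ, Finset.sum_powerset_apply_card (F2 N)]
  simp [Finset.card_univ, mul_comm]

lemma card_walks :
    Nat.card {w : Fin (N+1) → ℤ × ℤ //
      w 0 = (0, 0) ∧ w (Fin.last N) = (0, 0) ∧
      (∀ i, 0 ≤ (w i).1 ∧ 0 ≤ (w i).2) ∧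
      (∀ i : Fin N, w i.succ - w i.castSucc ∈
        ({(1,0), (-1,0), (0,1), (0,-1)} : Set (ℤ × ℤ)))}
      = ∑ m ∈ Finset.range (N + 1), N.choose m * F2 N m := by
  rw [Nat.card_congr ((walkEquiv N).trans ((stepEquiv N).trans (sigmaEquiv N))), card_sigma_eq]

end count

lemma tripleChoose {n k : ℕ} (hk : k ≤ n) :
    (2*n).choose (2*k) * (2*k).choose k * (2*(n-k)).choose (n-k)
      = (2*n).choose n * (n.choose k)^2 := by
  have h1 : (2*k).choose k * k.factorial * k.factorial = (2*k).factorial := by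
    have := Nat.choose_mul_factorial_mul_factorial (show k ≤ 2*k by omega)
    rwa [show 2*k - k = k by omega] at this
  have h2 : (2*(n-k)).choose (n-k) * (n-k).factorial * (n-k).factorial
      = (2*(n-k)).factorial := by
    have := Nat.choose_mul_factorial_mul_factorial (show (n-k) ≤ 2*(n-k) by omega)
    rwa [show 2*(n-k) - (n-k) = n-k by omega] at this
  have h3 : (2*n).choose (2*k) * (2*k).factorial * (2*(n-k)).factorial
      = (2*n).factorial := by
    have := Nat.choose_mul_factorial_mul_factorial (show 2*k ≤ 2*n by omega)
    rwa [show 2*n - 2*k = 2*(n-k) by omega] at this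
  have h4 : n.choose k * k.factorial * (n-k).factorial = n.factorial :=
    Nat.choose_mul_factorial_mul_factorial hk
  have h5 : (2*n).choose n * n.factorial * n.factorial = (2*n).factorial := by
    have := Nat.choose_mul_factorial_mul_factorial (show n ≤ 2*n by omega)
    rwa [show 2*n - n = n by omega] at this
  apply Nat.eq_of_mul_eq_mul_right
    (show 0 < k.factorial * k.factorial * (n-k).factorial * (n-k).factorial by positivity)
  calc (2*n).choose (2*k) * (2*k).choose k * (2*(n-k)).choose (n-k)
        * (k.factorial * k.factorial * (n-k).factorial * (n-k).factorial)
      = (2*n).choose (2*k) * ((2*k).choose k * k.factorial * k.factorial)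
        * ((2*(n-k)).choose (n-k) * (n-k).factorial * (n-k).factorial) := by ring
    _ = (2*n).choose (2*k) * (2*k).factorial * (2*(n-k)).factorial := by rw [h1, h2]
    _ = (2*n).factorial := h3
    _ = (2*n).choose n * n.factorial * n.factorial := h5.symm
    _ = (2*n).choose n * (n.choose k * k.factorial * (n-k).factorial)
        * (n.choose k * k.factorial * (n-k).factorial) := by rw [h4]
    _ = (2*n).choose n * (n.choose k)^2
        * (k.factorial * k.factorial * (n-k).factorial * (n-k).factorial) := by ring

lemma catMul (k : ℕ) : (k+1) * catalan k = (2*k).choose k :=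
  succ_mul_catalan_eq_centralBinom k

lemma perTerm {n k : ℕ} (hk : k ≤ n) :
    (n+1)^2 * ((2*n).choose (2*k) * (catalan k * catalan (n-k)))
      = (2*n).choose n * ((n+1).choose (k+1) * (n+1).choose k) := by
  apply Nat.eq_of_mul_eq_mul_right (show 0 < (k+1)*(n-k+1) by positivity)
  have hc1 := catMul k
  have hc2 := catMul (n-k)
  have hs1 : (n+1).choose (k+1) * (k+1) = (n+1) * n.choose k :=
    (Nat.add_one_mul_choose_eq n k).symm
  have hs2 : (n+1).choose k * (n-k+1) = (n+1) * n.choose k := by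
    have h := Nat.choose_succ_right_eq (n+1) k
    rw [hs1, show n+1-k = n-k+1 by omega] at h
    exact h.symm
  calc (n+1)^2 * ((2*n).choose (2*k) * (catalan k * catalan (n-k))) * ((k+1)*(n-k+1))
      = (n+1)^2 * ((2*n).choose (2*k) * (((k+1)*catalan k) * ((n-k+1)*catalan (n-k)))) := by
        ring
    _ = (n+1)^2 * ((2*n).choose (2*k) * ((2*k).choose k * (2*(n-k)).choose (n-k))) := by
        rw [hc1, hc2]
    _ = (n+1)^2 * ((2*n).choose (2*k) * (2*k).choose k * (2*(n-k)).choose (n-k)) := by ring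
    _ = (n+1)^2 * ((2*n).choose n * (n.choose k)^2) := by rw [tripleChoose hk]
    _ = (2*n).choose n * (((n+1) * n.choose k) * ((n+1) * n.choose k)) := by ring
    _ = (2*n).choose n * (((n+1).choose (k+1) * (k+1)) * ((n+1).choose k * (n-k+1))) := by
        rw [hs1, hs2]
    _ = (2*n).choose n * ((n+1).choose (k+1) * (n+1).choose k) * ((k+1)*(n-k+1)) := by ring

lemma vdm (n : ℕ) :
    ∑ k ∈ range (n+1), (n+1).choose (k+1) * (n+1).choose k = (2*n+2).choose n := by
  have h := Nat.add_choose_eq (n+1) (n+1) n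
  rw [Finset.Nat.sum_antidiagonal_eq_sum_range_succ_mk, show (n+1)+(n+1) = 2*n+2 by ring] at h
  rw [h]
  apply Finset.sum_congr rfl
  intro k hk
  simp only [Finset.mem_range] at hk
  have hsym : (n+1).choose (n-k) = (n+1).choose (k+1) := by
    rw [← Nat.choose_symm (show n - k ≤ n+1 by omega)]
    congr 1
    omega
  rw [hsym, mul_comm]

lemma finArith (n : ℕ) :
    (2*n).choose n * (2*n+2).choose n = (n+1)^2 * (catalan n * catalan (n+1)) := by
  apply Nat.eq_of_mul_eq_mul_right (show 0 < n+2 by omega)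
  have hc1 := catMul n
  have hc2 : (n+2) * catalan (n+1) = (2*n+2).choose (n+1) := by
    have := catMul (n+1)
    rwa [show 2*(n+1) = 2*n+2 by ring] at this
  have hswap : (2*n+2).choose (n+1) * (n+1) = (2*n+2).choose n * (n+2) := by
    have h := Nat.choose_succ_right_eq (2*n+2) n
    rwa [show 2*n+2-n = n+2 by omega] at h
  calc (2*n).choose n * (2*n+2).choose n * (n+2)
      = (2*n).choose n * ((2*n+2).choose n * (n+2)) := by ring
    _ = (2*n).choose n * ((2*n+2).choose (n+1) * (n+1)) := by rw [hswap]
    _ = ((n+1) * catalan n) * (((n+2) * catalan (n+1)) * (n+1)) := by rw [hc1, hc2]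
    _ = (n+1)^2 * (catalan n * catalan (n+1)) * (n+2) := by ring

lemma mainIdentity (n : ℕ) :
    ∑ k ∈ range (n+1), (2*n).choose (2*k) * (catalan k * catalan (n-k))
      = catalan n * catalan (n+1) := by
  apply Nat.eq_of_mul_eq_mul_left (show 0 < (n+1)^2 by positivity)
  rw [Finset.mul_sum]
  rw [Finset.sum_congr rfl (fun k hk => perTerm (by
    simp only [Finset.mem_range] at hk; omega))]
  rw [← Finset.mul_sum, vdm n, finArith n]

theorem stmt_11 (n : ℕ) (hn : 1 ≤ n) :
    Nat.card {w : Fin (2*n+1) → ℤ × ℤ //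
      w 0 = (0, 0) ∧ w (Fin.last (2*n)) = (0, 0) ∧
      (∀ i, 0 ≤ (w i).1 ∧ 0 ≤ (w i).2) ∧
      (∀ i : Fin (2*n), w i.succ - w i.castSucc ∈
        ({(1,0), (-1,0), (0,1), (0,-1)} : Set (ℤ × ℤ)))} =
    catalan n * catalan (n+1) := by
  rw [card_walks (2*n)]
  rw [← Finset.sum_filter_add_sum_filter_not (range (2*n+1)) (fun m => 2 ∣ m)
    (fun m => (2*n).choose m * F2 (2*n) m)]
  have hzero : ∑ m ∈ (range (2*n+1)).filter (fun m => ¬ 2 ∣ m),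
      (2*n).choose m * F2 (2*n) m = 0 := by
    apply Finset.sum_eq_zero
    intro m hm
    simp only [mem_filter] at hm
    simp [F2, hm.2]
  rw [hzero, add_zero]
  have himg : (range (2*n+1)).filter (fun m => 2 ∣ m) = (range (n+1)).image (fun k => 2*k) := by
    ext a
    simp only [mem_filter, mem_range, mem_image]
    constructor
    · rintro ⟨ha, b, rfl⟩
      exact ⟨b, by omega, rfl⟩
    · rintro ⟨k, hk, rfl⟩
      exact ⟨by omega, ⟨k, rfl⟩⟩
  rw [himg, Finset.sum_image (fun a _ b _ h => by omega)]
  have hterm : ∀ k ∈ range (n+1), (2*n).choose (2*k) * F2 (2*n) (2*k)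
      = (2*n).choose (2*k) * (catalan k * catalan (n-k)) := by
    intro k hk
    simp only [mem_range] at hk
    have h1 : (2:ℕ) ∣ 2*k := ⟨k, rfl⟩
    have h2 : 2*n - 2*k = 2*(n-k) := by omega
    have h3 : (2:ℕ) ∣ 2*(n-k) := ⟨n-k, rfl⟩
    simp [F2, h1, h2, h3, Nat.mul_div_cancel_left]
  rw [Finset.sum_congr rfl hterm, mainIdentity]
end

section
/- The equation √(36x + 3)/4 + sin(2π·√(12x + 1)/3) = 0 has exactly one solution x in the open interval (1/4, 2/3). -/
open Real Set

noncomputable def fbk : ℝ → ℝ := fun t => Real.sqrt 3 / 4 * t + Real.sin (2 * Real.pi / 3 * t)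

lemma fbk_cont : Continuous fbk := by
  unfold fbk; continuity

lemma fbk_deriv : deriv fbk = fun t =>
    Real.sqrt 3 / 4 + 2 * Real.pi / 3 * Real.cos (2 * Real.pi / 3 * t) := by
  funext t
  have h1 : HasDerivAt (fun t : ℝ => Real.sqrt 3 / 4 * t) (Real.sqrt 3 / 4) t := by
    simpa using (hasDerivAt_id t).const_mul (Real.sqrt 3 / 4)
  have h2 : HasDerivAt (fun t : ℝ => Real.sin (2 * Real.pi / 3 * t))
      (Real.cos (2 * Real.pi / 3 * t) * (2 * Real.pi / 3)) t := by
    have := (Real.hasDerivAt_sin (2 * Real.pi / 3 * t)).comp t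
      ((hasDerivAt_id t).const_mul (2 * Real.pi / 3))
    simpa [Function.comp_def] using this
  have := (h1.add h2).deriv
  rw [show fbk = fun t => Real.sqrt 3 / 4 * t + Real.sin (2 * Real.pi / 3 * t) from rfl]
  rw [show (fun t => Real.sqrt 3 / 4 * t + Real.sin (2 * Real.pi / 3 * t)) = (fun t : ℝ => Real.sqrt 3 / 4 * t) + (fun t : ℝ => Real.sin (2 * Real.pi / 3 * t)) from rfl, this]; ring

lemma fbk_deriv2 (t : ℝ) :
    deriv (deriv fbk) t = -(2 * Real.pi / 3) ^ 2 * Real.sin (2 * Real.pi / 3 * t) := by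
  rw [fbk_deriv]
  have h2 : HasDerivAt (fun t : ℝ => Real.cos (2 * Real.pi / 3 * t))
      (-Real.sin (2 * Real.pi / 3 * t) * (2 * Real.pi / 3)) t := by
    have := (Real.hasDerivAt_cos (2 * Real.pi / 3 * t)).comp t
      ((hasDerivAt_id t).const_mul (2 * Real.pi / 3))
    simpa [Function.comp_def] using this
  have h3 : HasDerivAt (fun t : ℝ =>
      Real.sqrt 3 / 4 + 2 * Real.pi / 3 * Real.cos (2 * Real.pi / 3 * t))
      (0 + 2 * Real.pi / 3 * (-Real.sin (2 * Real.pi / 3 * t) * (2 * Real.pi / 3))) t :=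
    (hasDerivAt_const t _).add (h2.const_mul _)
  rw [h3.deriv]; ring

lemma fbk_convex : StrictConvexOn ℝ (Set.Icc (2:ℝ) 3) fbk := by
  apply strictConvexOn_of_deriv2_pos (convex_Icc 2 3) fbk_cont.continuousOn
  intro x hx
  rw [interior_Icc] at hx
  rw [show deriv^[2] fbk x = deriv (deriv fbk) x from rfl, fbk_deriv2]
  have hpi := Real.pi_pos
  have hsin : Real.sin (2 * Real.pi / 3 * x) < 0 := by
    have : Real.sin (2 * Real.pi / 3 * x) = Real.sin (2 * Real.pi / 3 * x - 2 * Real.pi) := by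
      rw [Real.sin_sub_two_pi]
    rw [this]
    apply Real.sin_neg_of_neg_of_neg_pi_lt
    · nlinarith [hx.2]
    · nlinarith [hx.1]
  have hsq : 0 < (2 * Real.pi / 3) ^ 2 := by positivity
  nlinarith

lemma fbk_two : fbk 2 = 0 := by
  unfold fbk
  rw [show (2:ℝ) * Real.pi / 3 * 2 = Real.pi / 3 + Real.pi by ring, Real.sin_add_pi,
    Real.sin_pi_div_three]
  ring

lemma fbk_nine_fourth : fbk (9/4) < 0 := by
  unfold fbk
  rw [show (2:ℝ) * Real.pi / 3 * (9/4) = Real.pi / 2 + Real.pi by ring, Real.sin_add_pi,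
    Real.sin_pi_div_two]
  have : Real.sqrt 3 < 16/9 := by
    rw [Real.sqrt_lt' (by norm_num)]; norm_num
  nlinarith

lemma fbk_three : 0 < fbk 3 := by
  unfold fbk
  rw [show (2:ℝ) * Real.pi / 3 * 3 = 2 * Real.pi by ring, Real.sin_two_pi]
  have : 0 < Real.sqrt 3 := Real.sqrt_pos.mpr (by norm_num)
  nlinarith

-- uniqueness of the zero in (2,3)
lemma fbk_zero_unique {s t : ℝ} (hs : s ∈ Set.Ioo (2:ℝ) 3) (ht : t ∈ Set.Ioo (2:ℝ) 3)
    (hfs : fbk s = 0) (hft : fbk t = 0) : s = t := by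
  rcases lt_trichotomy s t with h | h | h
  · exfalso
    have h2 : (2:ℝ) ∈ Set.Icc (2:ℝ) 3 := by constructor <;> norm_num
    have htI : t ∈ Set.Icc (2:ℝ) 3 := ⟨le_of_lt ht.1, le_of_lt ht.2⟩
    have hne : (2:ℝ) ≠ t := ne_of_lt ht.1
    have ha : 0 < (t - s) / (t - 2) := by
      apply div_pos <;> linarith [hs.1]
    have hb : 0 < (s - 2) / (t - 2) := by
      apply div_pos <;> linarith [hs.1]
    have ht2 : t - 2 ≠ 0 := by linarith [ht.1]
    have hab : (t - s) / (t - 2) + (s - 2) / (t - 2) = 1 := by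
      field_simp; ring
    have key := fbk_convex.2 h2 htI hne ha hb hab
    have hcomb : ((t - s) / (t - 2)) • (2:ℝ) + ((s - 2) / (t - 2)) • t = s := by
      rw [smul_eq_mul, smul_eq_mul, div_mul_eq_mul_div, div_mul_eq_mul_div,
        ← add_div, div_eq_iff ht2]
      ring
    rw [hcomb, fbk_two, hft] at key
    simp at key
    linarith [key, hfs.ge, hfs.le]
  · exact h
  · exfalso
    have h2 : (2:ℝ) ∈ Set.Icc (2:ℝ) 3 := by constructor <;> norm_num
    have hsI : s ∈ Set.Icc (2:ℝ) 3 := ⟨le_of_lt hs.1, le_of_lt hs.2⟩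
    have hne : (2:ℝ) ≠ s := ne_of_lt hs.1
    have ha : 0 < (s - t) / (s - 2) := by
      apply div_pos <;> linarith [ht.1]
    have hb : 0 < (t - 2) / (s - 2) := by
      apply div_pos <;> linarith [ht.1]
    have hs2' : s - 2 ≠ 0 := by linarith [hs.1]
    have hab : (s - t) / (s - 2) + (t - 2) / (s - 2) = 1 := by
      field_simp; ring
    have key := fbk_convex.2 h2 hsI hne ha hb hab
    have hcomb : ((s - t) / (s - 2)) • (2:ℝ) + ((t - 2) / (s - 2)) • s = t := by
      rw [smul_eq_mul, smul_eq_mul, div_mul_eq_mul_div, div_mul_eq_mul_div,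
        ← add_div, div_eq_iff hs2']
      ring
    rw [hcomb, fbk_two, hfs] at key
    simp at key
    linarith [key, hft.ge, hft.le]

lemma fbk_exists : ∃ t ∈ Set.Ioo (9/4 : ℝ) 3, fbk t = 0 := by
  have h := intermediate_value_Ioo (by norm_num : (9/4:ℝ) ≤ 3) fbk_cont.continuousOn
  have h0 : (0:ℝ) ∈ Set.Ioo (fbk (9/4)) (fbk 3) := ⟨fbk_nine_fourth, fbk_three⟩
  obtain ⟨t, ht, hft⟩ := h h0
  exact ⟨t, ht, hft⟩

-- reduce original equation to fbk
lemma eq_iff_fbk {x : ℝ} (hx : x ∈ Set.Ioo (1/4 : ℝ) (2/3 : ℝ)) :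
    Real.sqrt (36 * x + 3) / 4 + Real.sin (2 * Real.pi * Real.sqrt (12 * x + 1) / 3)
      = fbk (Real.sqrt (12 * x + 1)) := by
  unfold fbk
  have h1 : (36:ℝ) * x + 3 = 3 * (12 * x + 1) := by ring
  rw [h1, Real.sqrt_mul (by norm_num : (0:ℝ) ≤ 3)]
  ring_nf

theorem stmt_12 :
    ∃! x : ℝ, x ∈ Set.Ioo (1/4 : ℝ) (2/3 : ℝ) ∧
      Real.sqrt (36 * x + 3) / 4 + Real.sin (2 * Real.pi * Real.sqrt (12 * x + 1) / 3) = 0 := by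
  obtain ⟨t, ht, hft⟩ := fbk_exists
  have ht23 : t ∈ Set.Ioo (2:ℝ) 3 := ⟨by linarith [ht.1], ht.2⟩
  have htpos : (0:ℝ) < t := by linarith [ht.1]
  refine ⟨(t^2 - 1) / 12, ⟨⟨?_, ?_⟩, ?_⟩, ?_⟩
  · nlinarith [ht.1]
  · nlinarith [ht.2, htpos]
  · have hs : Real.sqrt (12 * ((t^2 - 1) / 12) + 1) = t := by
      rw [show 12 * ((t^2 - 1) / 12) + 1 = t^2 by ring]
      exact Real.sqrt_sq htpos.le
    have hxmem : (t^2 - 1) / 12 ∈ Set.Ioo (1/4 : ℝ) (2/3 : ℝ) := by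
      constructor
      · nlinarith [ht.1]
      · nlinarith [ht.2, htpos]
    rw [eq_iff_fbk hxmem, hs]
    exact hft
  · rintro y ⟨hy, hyeq⟩
    set s := Real.sqrt (12 * y + 1) with hsdef
    have hs4 : (4:ℝ) < 12 * y + 1 := by linarith [hy.1]
    have hs9 : 12 * y + 1 < 9 := by linarith [hy.2]
    have hs2 : (2:ℝ) < s := by
      have : Real.sqrt 4 < s := Real.sqrt_lt_sqrt (by norm_num) hs4
      simpa [show (4:ℝ) = 2^2 by norm_num, Real.sqrt_sq (by norm_num : (0:ℝ) ≤ 2)] using this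
    have hs3 : s < 3 := by
      have : s < Real.sqrt 9 := Real.sqrt_lt_sqrt (by linarith) hs9
      simpa [show (9:ℝ) = 3^2 by norm_num, Real.sqrt_sq (by norm_num : (0:ℝ) ≤ 3)] using this
    have hfs : fbk s = 0 := by
      rw [← eq_iff_fbk hy]; exact hyeq
    have hst : s = t := fbk_zero_unique ⟨hs2, hs3⟩ ht23 hfs hft
    have hsq : s ^ 2 = 12 * y + 1 := Real.sq_sqrt (by linarith)
    rw [hst] at hsq
    linarith [hsq]
end
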